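/- Let E₁ and E₂ be smooth functions on the upper half-plane H² = {(x,y) ∈ ℝ² : y > 0} such that ∇dE₁ + RgE₁ = ∇dE₂ + RgE₂ componentwise, i.e. (E₁)_xx − (E₁)_y/y − E₁/y² = (E₂)_xx − (E₂)_y/y − E₂/y², (E₁)_xy + (E₁)_x/y = (E₂)_xy + (E₂)_x/y, and (E₁)_yy + (E₁)_y/y − E₁/y² = (E₂)_yy + (E₂)_y/y − E₂/y² on H². Then there exist real constants a, b, c with E₁ − E₂ = a·(x/y) + b·(1/y) + c·(x² + y²)/y on H². -/

import Mathlib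

/-- Partial derivative in the first coordinate direction on `ℝ²`. -/
noncomputable def pdx (f : (ℝ × ℝ) → ℝ) (z : ℝ × ℝ) : ℝ := fderiv ℝ f z (1, 0)

/-- Partial derivative in the second coordinate direction on `ℝ²`. -/
noncomputable def pdy (f : (ℝ × ℝ) → ℝ) (z : ℝ × ℝ) : ℝ := fderiv ℝ f z (0, 1)

/-- The upper half-plane `H² = {(x, y) : y > 0}`. -/
def UHP : Set (ℝ × ℝ) := {z : ℝ × ℝ | 0 < z.2}

lemma uhp_open : IsOpen UHP := isOpen_lt continuous_const continuous_snd

lemma uhp_convex : Convex ℝ UHP :=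
  (convex_Ioi (0:ℝ)).linear_preimage (LinearMap.snd ℝ ℝ ℝ)

lemma base_mem : ((0:ℝ),(1:ℝ)) ∈ UHP := by simp [UHP]

lemma two_le_top : (2 : WithTop ℕ∞) ≤ ((⊤:ℕ∞) : WithTop ℕ∞) := by
  rw [show (2 : WithTop ℕ∞) = ((2:ℕ∞) : WithTop ℕ∞) by rfl]
  exact WithTop.coe_le_coe.2 le_top

lemma contDiffAt_two (F : (ℝ × ℝ) → ℝ) (hF : ContDiffOn ℝ (⊤ : ℕ∞) F UHP)
    {z : ℝ × ℝ} (hz : z ∈ UHP) : ContDiffAt ℝ 2 F z :=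
  (hF.contDiffAt (uhp_open.mem_nhds hz)).of_le two_le_top

lemma pd_hasFDerivAt (F : (ℝ × ℝ) → ℝ) (hF : ContDiffOn ℝ (⊤ : ℕ∞) F UHP)
    {z : ℝ × ℝ} (hz : z ∈ UHP) (e : ℝ × ℝ) :
    HasFDerivAt (fun w => fderiv ℝ F w e)
      ((ContinuousLinearMap.apply ℝ ℝ e).comp (fderiv ℝ (fderiv ℝ F) z)) z := by
  have h1 : ContDiffAt ℝ 1 (fderiv ℝ F) z :=
    (contDiffAt_two F hF hz).fderiv_right (by norm_num)
  have h2 : HasFDerivAt (fderiv ℝ F) (fderiv ℝ (fderiv ℝ F) z) z :=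
    (h1.differentiableAt one_ne_zero).hasFDerivAt
  exact (ContinuousLinearMap.apply ℝ ℝ e).hasFDerivAt.comp z h2

lemma pd_symm (F : (ℝ × ℝ) → ℝ) (hF : ContDiffOn ℝ (⊤ : ℕ∞) F UHP)
    {z : ℝ × ℝ} (hz : z ∈ UHP) (p q : ℝ × ℝ) :
    fderiv ℝ (fderiv ℝ F) z p q = fderiv ℝ (fderiv ℝ F) z q p :=
  (contDiffAt_two F hF hz).isSymmSndFDerivAt (by simp) p q

lemma expandM {M : Type*} [AddCommGroup M] [Module ℝ M] [TopologicalSpace M]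
    (L : (ℝ × ℝ) →L[ℝ] M) (p : ℝ × ℝ) :
    L p = p.1 • L (1,0) + p.2 • L (0,1) := by
  conv_lhs => rw [show p = p.1 • ((1:ℝ),(0:ℝ)) + p.2 • ((0:ℝ),(1:ℝ)) by
    simp [Prod.ext_iff]]
  rw [map_add, map_smul, map_smul]

lemma expandR (L : (ℝ × ℝ) →L[ℝ] ℝ) (p : ℝ × ℝ) :
    L p = p.1 * L (1,0) + p.2 * L (0,1) := by
  simpa using expandM L p

lemma const_on_UHP (g : (ℝ × ℝ) → ℝ)
    (h : ∀ z ∈ UHP, HasFDerivWithinAt g (0 : (ℝ × ℝ) →L[ℝ] ℝ) UHP z) :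
    ∃ c : ℝ, ∀ z ∈ UHP, g z = c := by
  refine ⟨g ((0:ℝ),(1:ℝ)), fun z hz => ?_⟩
  have := uhp_convex.norm_image_sub_le_of_norm_hasFDerivWithin_le (C := 0)
    (f' := fun _ => (0 : (ℝ × ℝ) →L[ℝ] ℝ)) (fun w hw => h w hw)
    (fun w hw => by simp) base_mem hz
  simp only [zero_mul, norm_le_zero_iff, sub_eq_zero] at this
  exact this

theorem kernel_char (F : (ℝ × ℝ) → ℝ)
    (hF : ContDiffOn ℝ (⊤ : ℕ∞) F UHP)
    (e11 : ∀ z ∈ UHP, pdx (fun w => pdx F w) z = pdy F z / z.2 + F z / z.2 ^ 2)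
    (e12 : ∀ z ∈ UHP, pdx (fun w => pdy F w) z = - pdx F z / z.2)
    (e22 : ∀ z ∈ UHP, pdy (fun w => pdy F w) z = - pdy F z / z.2 + F z / z.2 ^ 2) :
    ∃ a b c : ℝ, ∀ z ∈ UHP,
      F z = a * (z.1 / z.2) + b * (1 / z.2) + c * ((z.1 ^ 2 + z.2 ^ 2) / z.2) := by
  -- second derivative entries
  have hA : ∀ z ∈ UHP, fderiv ℝ (fderiv ℝ F) z (1,0) (1,0)
      = pdy F z / z.2 + F z / z.2 ^ 2 := by
    intro z hz
    have h := e11 z hz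
    rw [show pdx (fun w => pdx F w) z
        = fderiv ℝ (fun w => fderiv ℝ F w (1,0)) z (1,0) from rfl,
      (pd_hasFDerivAt F hF hz (1,0)).fderiv] at h
    simpa using h
  have hB : ∀ z ∈ UHP, fderiv ℝ (fderiv ℝ F) z (1,0) (0,1)
      = - pdx F z / z.2 := by
    intro z hz
    have h := e12 z hz
    rw [show pdx (fun w => pdy F w) z
        = fderiv ℝ (fun w => fderiv ℝ F w (0,1)) z (1,0) from rfl,
      (pd_hasFDerivAt F hF hz (0,1)).fderiv] at h
    simpa using h
  have hB' : ∀ z ∈ UHP, fderiv ℝ (fderiv ℝ F) z (0,1) (1,0)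
      = - pdx F z / z.2 := by
    intro z hz
    rw [pd_symm F hF hz]
    exact hB z hz
  have hC : ∀ z ∈ UHP, fderiv ℝ (fderiv ℝ F) z (0,1) (0,1)
      = - pdy F z / z.2 + F z / z.2 ^ 2 := by
    intro z hz
    have h := e22 z hz
    rw [show pdy (fun w => pdy F w) z
        = fderiv ℝ (fun w => fderiv ℝ F w (0,1)) z (0,1) from rfl,
      (pd_hasFDerivAt F hF hz (0,1)).fderiv] at h
    simpa using h
  have hdF : ∀ z ∈ UHP, HasFDerivAt F (fderiv ℝ F z) z := fun z hz =>
    ((contDiffAt_two F hF hz).differentiableAt two_ne_zero).hasFDerivAt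
  -- Step 1 : F/y + F_y  is constant
  obtain ⟨K, hK⟩ : ∃ K : ℝ, ∀ z ∈ UHP, F z * (z.2)⁻¹ + pdy F z = K := by
    apply const_on_UHP
    intro z hz
    have hy0 : z.2 ≠ 0 := ne_of_gt hz
    have hinv : HasFDerivAt (fun w : ℝ × ℝ => (w.2)⁻¹)
        ((-(z.2 ^ 2)⁻¹) • ContinuousLinearMap.snd ℝ ℝ ℝ) z :=
      (hasDerivAt_inv hy0).comp_hasFDerivAt z hasFDerivAt_snd
    have htot := ((hdF z hz).mul hinv).add (pd_hasFDerivAt F hF hz (0,1))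
    have h0 : HasFDerivAt (fun w : ℝ × ℝ => F w * (w.2)⁻¹ + pdy F w)
        (0 : (ℝ × ℝ) →L[ℝ] ℝ) z := by
      refine htot.congr_fderiv ?_
      symm
      apply ContinuousLinearMap.ext; intro p
      simp only [ContinuousLinearMap.add_apply, ContinuousLinearMap.smul_apply,
        ContinuousLinearMap.comp_apply, ContinuousLinearMap.apply_apply,
        ContinuousLinearMap.coe_snd', ContinuousLinearMap.zero_apply, smul_eq_mul]
      rw [expandR (fderiv ℝ F z) p, expandM (fderiv ℝ (fderiv ℝ F) z) p]
      simp only [ContinuousLinearMap.add_apply, ContinuousLinearMap.smul_apply, smul_eq_mul]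
      rw [show fderiv ℝ F z (1,0) = pdx F z from rfl,
        show fderiv ℝ F z (0,1) = pdy F z from rfl, hB z hz, hC z hz]
      field_simp
      ring
    exact h0.hasFDerivWithinAt
  -- Step 2 : y F_x - K x is constant
  obtain ⟨A2, hA2⟩ : ∃ A2 : ℝ, ∀ z ∈ UHP, z.2 * pdx F z - K * z.1 = A2 := by
    apply const_on_UHP
    intro z hz
    have hy0 : z.2 ≠ 0 := ne_of_gt hz
    have hKy : F z + pdy F z * z.2 = K * z.2 := by
      have h := hK z hz
      field_simp at h
      linarith
    have htot := (hasFDerivAt_snd.mul (pd_hasFDerivAt F hF hz (1,0))).sub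
      (hasFDerivAt_fst.const_mul K)
    have h0 : HasFDerivAt (fun w : ℝ × ℝ => w.2 * pdx F w - K * w.1)
        (0 : (ℝ × ℝ) →L[ℝ] ℝ) z := by
      refine htot.congr_fderiv ?_
      symm
      apply ContinuousLinearMap.ext; intro p
      simp only [ContinuousLinearMap.sub_apply, ContinuousLinearMap.add_apply,
        ContinuousLinearMap.smul_apply, ContinuousLinearMap.comp_apply,
        ContinuousLinearMap.apply_apply, ContinuousLinearMap.coe_snd',
        ContinuousLinearMap.coe_fst', ContinuousLinearMap.zero_apply, smul_eq_mul]
      rw [expandM (fderiv ℝ (fderiv ℝ F) z) p]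
      simp only [ContinuousLinearMap.add_apply, ContinuousLinearMap.smul_apply, smul_eq_mul]
      rw [hA z hz, hB' z hz,
        show fderiv ℝ F z (1,0) = pdx F z from rfl, ← hK z hz]
      field_simp
      ring
    exact h0.hasFDerivWithinAt
  -- Step 3 : y F - (K/2)(x² + y²) - A2 x is constant
  obtain ⟨B2, hB2⟩ : ∃ B2 : ℝ, ∀ z ∈ UHP,
      z.2 * F z - K/2 * (z.1 * z.1) - K/2 * (z.2 * z.2) - A2 * z.1 = B2 := by
    apply const_on_UHP
    intro z hz
    have hy0 : z.2 ≠ 0 := ne_of_gt hz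
    have hKy : F z + pdy F z * z.2 = K * z.2 := by
      have h := hK z hz
      field_simp at h
      linarith
    have htot := (((hasFDerivAt_snd.mul (hdF z hz)).sub
        ((hasFDerivAt_fst.mul hasFDerivAt_fst).const_mul (K/2))).sub
        ((hasFDerivAt_snd.mul hasFDerivAt_snd).const_mul (K/2))).sub
        (hasFDerivAt_fst.const_mul A2)
    have h0 : HasFDerivAt (fun w : ℝ × ℝ =>
        w.2 * F w - K/2 * (w.1 * w.1) - K/2 * (w.2 * w.2) - A2 * w.1)
        (0 : (ℝ × ℝ) →L[ℝ] ℝ) z := by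
      refine htot.congr_fderiv ?_
      symm
      apply ContinuousLinearMap.ext; intro p
      simp only [ContinuousLinearMap.sub_apply, ContinuousLinearMap.add_apply,
        ContinuousLinearMap.smul_apply, ContinuousLinearMap.comp_apply,
        ContinuousLinearMap.apply_apply, ContinuousLinearMap.coe_snd',
        ContinuousLinearMap.coe_fst', ContinuousLinearMap.zero_apply, smul_eq_mul]
      rw [expandR (fderiv ℝ F z) p]
      rw [show fderiv ℝ F z (1,0) = pdx F z from rfl,
        show fderiv ℝ F z (0,1) = pdy F z from rfl]
      linear_combination (-p.2) * hKy + (-p.1) * hA2 z hz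
    exact h0.hasFDerivWithinAt
  refine ⟨A2, B2, K/2, fun z hz => ?_⟩
  have hy0 : z.2 ≠ 0 := ne_of_gt hz
  have h := hB2 z hz
  rw [← h]
  field_simp
  ring

/-- If two smooth functions `E₁, E₂` on the upper half-plane satisfy
`∇dE₁ + RgE₁ = ∇dE₂ + RgE₂` componentwise for the hyperbolic metric (`R = −1`), then
`E₁ − E₂` is a real linear combination of `k₀ = x/y`, `k₁ = 1/y`, `k₂ = (x² + y²)/y`. -/
theorem nabla_d_Rg_solutions_unique_up_to_kernel
    (E₁ E₂ : (ℝ × ℝ) → ℝ)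
    (hE₁ : ContDiffOn ℝ (⊤ : ℕ∞) E₁ UHP)
    (hE₂ : ContDiffOn ℝ (⊤ : ℕ∞) E₂ UHP)
    (h11 : ∀ z ∈ UHP,
      pdx (fun w => pdx E₁ w) z - pdy E₁ z / z.2 - E₁ z / z.2 ^ 2 =
        pdx (fun w => pdx E₂ w) z - pdy E₂ z / z.2 - E₂ z / z.2 ^ 2)
    (h12 : ∀ z ∈ UHP,
      pdx (fun w => pdy E₁ w) z + pdx E₁ z / z.2 =
        pdx (fun w => pdy E₂ w) z + pdx E₂ z / z.2)
    (h22 : ∀ z ∈ UHP,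
      pdy (fun w => pdy E₁ w) z + pdy E₁ z / z.2 - E₁ z / z.2 ^ 2 =
        pdy (fun w => pdy E₂ w) z + pdy E₂ z / z.2 - E₂ z / z.2 ^ 2) :
    ∃ a b c : ℝ, ∀ z ∈ UHP,
      E₁ z - E₂ z = a * (z.1 / z.2) + b * (1 / z.2) + c * ((z.1 ^ 2 + z.2 ^ 2) / z.2) := by
  classical
  set F : (ℝ × ℝ) → ℝ := fun z => E₁ z - E₂ z with hFdef
  have hF : ContDiffOn ℝ (⊤ : ℕ∞) F UHP := hE₁.sub hE₂
  have hd1 : ∀ w ∈ UHP, DifferentiableAt ℝ E₁ w := fun w hw =>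
    (contDiffAt_two E₁ hE₁ hw).differentiableAt two_ne_zero
  have hd2 : ∀ w ∈ UHP, DifferentiableAt ℝ E₂ w := fun w hw =>
    (contDiffAt_two E₂ hE₂ hw).differentiableAt two_ne_zero
  have hsub : ∀ w ∈ UHP, fderiv ℝ F w = fderiv ℝ E₁ w - fderiv ℝ E₂ w := fun w hw =>
    fderiv_sub (hd1 w hw) (hd2 w hw)
  have hsub2 : ∀ e : ℝ × ℝ, ∀ z ∈ UHP,
      fderiv ℝ (fun w => fderiv ℝ F w e) z
        = fderiv ℝ (fun w => fderiv ℝ E₁ w e) z - fderiv ℝ (fun w => fderiv ℝ E₂ w e) z := by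
    intro e z hz
    have hev : (fun w => fderiv ℝ F w e)
        =ᶠ[nhds z] (fun w => fderiv ℝ E₁ w e - fderiv ℝ E₂ w e) := by
      filter_upwards [uhp_open.mem_nhds hz] with w hw
      rw [hsub w hw]
      simp
    rw [hev.fderiv_eq,
      fderiv_fun_sub (pd_hasFDerivAt E₁ hE₁ hz e).differentiableAt
        (pd_hasFDerivAt E₂ hE₂ hz e).differentiableAt]
  have hpdx : ∀ z ∈ UHP, pdx F z = pdx E₁ z - pdx E₂ z := by
    intro z hz
    show fderiv ℝ F z (1,0) = _
    rw [hsub z hz]; simp [pdx]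
  have hpdy : ∀ z ∈ UHP, pdy F z = pdy E₁ z - pdy E₂ z := by
    intro z hz
    show fderiv ℝ F z (0,1) = _
    rw [hsub z hz]; simp [pdy]
  have hsnd : ∀ e e' : ℝ × ℝ, ∀ z ∈ UHP,
      fderiv ℝ (fun w => fderiv ℝ F w e) z e'
        = fderiv ℝ (fun w => fderiv ℝ E₁ w e) z e'
          - fderiv ℝ (fun w => fderiv ℝ E₂ w e) z e' := by
    intro e e' z hz
    rw [hsub2 e z hz]; simp
  have e11 : ∀ z ∈ UHP, pdx (fun w => pdx F w) z = pdy F z / z.2 + F z / z.2 ^ 2 := by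
    intro z hz
    have hy0 : z.2 ≠ 0 := ne_of_gt hz
    have h := h11 z hz
    have l1 : pdx (fun w => pdx F w) z
        = pdx (fun w => pdx E₁ w) z - pdx (fun w => pdx E₂ w) z :=
      hsnd (1,0) (1,0) z hz
    rw [l1, hpdy z hz, hFdef]
    field_simp
    field_simp at h
    linarith
  have e12 : ∀ z ∈ UHP, pdx (fun w => pdy F w) z = - pdx F z / z.2 := by
    intro z hz
    have hy0 : z.2 ≠ 0 := ne_of_gt hz
    have h := h12 z hz
    have l1 : pdx (fun w => pdy F w) z
        = pdx (fun w => pdy E₁ w) z - pdx (fun w => pdy E₂ w) z :=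
      hsnd (0,1) (1,0) z hz
    rw [l1, hpdx z hz]
    field_simp
    field_simp at h
    linarith
  have e22 : ∀ z ∈ UHP, pdy (fun w => pdy F w) z = - pdy F z / z.2 + F z / z.2 ^ 2 := by
    intro z hz
    have hy0 : z.2 ≠ 0 := ne_of_gt hz
    have h := h22 z hz
    have l1 : pdy (fun w => pdy F w) z
        = pdy (fun w => pdy E₁ w) z - pdy (fun w => pdy E₂ w) z :=
      hsnd (0,1) (0,1) z hz
    rw [l1, hpdy z hz, hFdef]
    field_simp
    field_simp at h
    linarith
  obtain ⟨a, b, c, habc⟩ := kernel_char F hF e11 e12 e22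
  exact ⟨a, b, c, fun z hz => habc z hz⟩
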